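/- Let $\mu = m + \delta_1$ on $\mathbb{R}$, where $m$ is Lebesgue measure and $\delta_1$ the Dirac measure at $1$. Then $\mu$ is doubling at $0$ (there is $C$ with $\mu((-2r,2r)) \le C\mu((-r,r))$ for all $r > 0$), but for every $\eta > 0$ and $C > 0$ there exist $0 < r < R$ with $\mu((-R,R) \setminus (-r,r)) > C(1 - r/R)^\eta\,\mu((-R,R))$; that is, $\mu$ does not have the $\eta$-annular decay property at $0$ for any $\eta > 0$. -/

import Mathlib

open MeasureTheory Metric

theorem stmt_16 (μ : Measure ℝ) (hμ : μ = volume + Measure.dirac 1) :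
    (∃ C : ℝ, 0 < C ∧ ∀ r : ℝ, 0 < r →
      μ (ball (0:ℝ) (2 * r)) ≤ ENNReal.ofReal C * μ (ball (0:ℝ) r)) ∧
    (∀ η C : ℝ, 0 < η → 0 < C → ∃ r R : ℝ, 0 < r ∧ r < R ∧
      ENNReal.ofReal (C * (1 - r / R) ^ η) * μ (ball (0:ℝ) R) <
        μ (ball (0:ℝ) R \ ball (0:ℝ) r)) := by
  subst hμ
  have key : ∀ s : ℝ, 0 < s → ((volume + Measure.dirac 1 : Measure ℝ)) (ball (0:ℝ) s)
      = ENNReal.ofReal (2 * s + if 1 < s then 1 else 0) := by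
    intro s hs
    rw [Real.ball_eq_Ioo, zero_sub, zero_add, Measure.add_apply, Real.volume_Ioo,
      Measure.dirac_apply]
    simp only [Set.indicator_apply, Set.mem_Ioo, Pi.one_apply]
    have hss : s - -s = 2 * s := by ring
    split_ifs with h1 h2 h2
    · rw [hss, ENNReal.ofReal_add (by positivity) zero_le_one, ENNReal.ofReal_one]
    · exact absurd h1.2 h2
    · exact absurd ⟨by linarith, h2⟩ h1
    · simp [hss]
  constructor
  · refine ⟨3, by norm_num, fun r hr => ?_⟩
    rw [key _ (by linarith), key _ hr, ← ENNReal.ofReal_mul (by norm_num : (0:ℝ) ≤ 3)]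
    apply ENNReal.ofReal_le_ofReal
    split_ifs with h1 h2 h2 <;> nlinarith
  · intro η C hη hC
    set ε : ℝ := min 1 ((1 / (10 * C)) ^ (1 / η)) with hε
    have hpow : (0:ℝ) < (1 / (10 * C)) ^ (1 / η) :=
      Real.rpow_pos_of_pos (by positivity) _
    have hεpos : 0 < ε := lt_min one_pos hpow
    have hε1 : ε ≤ 1 := min_le_left _ _
    refine ⟨1, 1 + ε, one_pos, by linarith, ?_⟩
    have hR : (1:ℝ) < 1 + ε := by linarith
    have hball : (1:ℝ) ∈ ball (0:ℝ) (1 + ε) \ ball (0:ℝ) 1 := by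
      constructor
      · simp [Real.dist_eq, abs_of_pos, hR]
      · simp [Real.dist_eq]
    have hRHS : (1:ENNReal) ≤ ((volume + Measure.dirac 1 : Measure ℝ)) (ball (0:ℝ) (1 + ε) \ ball (0:ℝ) 1) := by
      rw [Measure.add_apply]
      calc (1:ENNReal) = Measure.dirac 1 (ball (0:ℝ) (1 + ε) \ ball (0:ℝ) 1) :=
            (Measure.dirac_apply_of_mem hball).symm
        _ ≤ _ := le_add_self
    have h1ε : (0:ℝ) < 1 + ε := by linarith
    have hsub : 1 - 1 / (1 + ε) ≤ ε := by
      have heq : 1 - 1 / (1 + ε) = ε / (1 + ε) := by field_simp; ring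
      rw [heq, div_le_iff₀ h1ε]; nlinarith
    have hsubnn : (0:ℝ) ≤ 1 - 1 / (1 + ε) := by
      have : 1 / (1 + ε) ≤ 1 := by
        rw [div_le_one h1ε]; linarith
      linarith
    rw [key _ (by linarith), if_pos hR,
      ← ENNReal.ofReal_mul (mul_nonneg hC.le (Real.rpow_nonneg hsubnn _))]
    have hεpow : ε ^ η ≤ 1 / (10 * C) := by
      calc ε ^ η ≤ ((1 / (10 * C)) ^ (1 / η)) ^ η :=
            Real.rpow_le_rpow hεpos.le (min_le_right _ _) hη.le
        _ = 1 / (10 * C) := by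
            rw [← Real.rpow_mul (by positivity), one_div_mul_cancel hη.ne', Real.rpow_one]
    have hmono : (1 - 1 / (1 + ε)) ^ η ≤ ε ^ η :=
      Real.rpow_le_rpow hsubnn hsub hη.le
    have hεppos : (0:ℝ) ≤ (1 - 1 / (1 + ε)) ^ η := Real.rpow_nonneg hsubnn _
    have hreal : C * (1 - 1 / (1 + ε)) ^ η * (2 * (1 + ε) + 1) ≤ 1 / 2 := by
      have h5 : 2 * (1 + ε) + 1 ≤ 5 := by linarith
      have := mul_le_mul_of_nonneg_left hmono hC.le
      have h2 : C * (1 - 1 / (1 + ε)) ^ η ≤ 1 / 10 := by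
        calc C * (1 - 1 / (1 + ε)) ^ η ≤ C * ε ^ η := this
          _ ≤ C * (1 / (10 * C)) := mul_le_mul_of_nonneg_left hεpow hC.le
          _ = 1 / 10 := by field_simp
      nlinarith [Real.rpow_nonneg hsubnn η]
    calc ENNReal.ofReal (C * (1 - 1 / (1 + ε)) ^ η * (2 * (1 + ε) + 1))
        ≤ ENNReal.ofReal (1 / 2) := ENNReal.ofReal_le_ofReal hreal
      _ < 1 := by rw [← ENNReal.ofReal_one]; exact ENNReal.ofReal_lt_ofReal_iff_of_nonneg (by norm_num) |>.mpr (by norm_num)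
      _ ≤ _ := hRHS
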